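/- Let b ≥ 4 and k ≥ 0. The number n = 2·b^{k+2} + (b−2)·b + (b−1), i.e., the number with base-b digits 2, 0, ..., 0 (k zeros), b−2, b−1, requires at least three applications of partition and sum in base b to reach a single digit. -/

import Mathlib

def PartSum (b n m : ℕ) : Prop :=
  ∃ L : List (List ℕ), (∀ l ∈ L, l ≠ []) ∧ L.flatten = Nat.digits b n ∧
    m = (L.map (fun l => Nat.ofDigits b l)).sum

open List

lemma ofDigits_replicate_zero (b k : ℕ) : Nat.ofDigits b (List.replicate k 0) = 0 := by
  induction k with
  | zero => simp [Nat.ofDigits]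
  | succ k ih => simp [List.replicate_succ, Nat.ofDigits_cons, ih]

lemma mod_ne_zero' {v b : ℕ} (h1 : v < 2 * b) (h2 : v ≠ 0) (h3 : v ≠ b) : v % b ≠ 0 := by
  rcases Nat.lt_or_ge v b with h | h
  · rw [Nat.mod_eq_of_lt h]; exact h2
  · rw [Nat.mod_eq_sub_mod h, Nat.mod_eq_of_lt (by omega)]; omega

lemma digits_n (b k : ℕ) (hb : 4 ≤ b) :
    Nat.digits b (2 * b ^ (k + 2) + (b - 2) * b + (b - 1)) =
      (b-1) :: (b-2) :: (List.replicate k 0 ++ [2]) := by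
  obtain ⟨c, rfl⟩ : ∃ c, b = c + 4 := ⟨b - 4, by omega⟩
  have h1 : c + 4 - 1 = c + 3 := by omega
  have h2 : c + 4 - 2 = c + 2 := by omega
  rw [h1, h2]
  have := Nat.digits_ofDigits (c+4) (by omega)
    ((c+3) :: (c+2) :: (List.replicate k 0 ++ [2]))
    (by
      intro l hl
      simp [List.mem_replicate] at hl
      rcases hl with h | h | h | h <;> omega)
    (by
      intro h
      rw [List.getLast_cons, List.getLast_cons, List.getLast_append] at *
      · simp
      · simp
      · simp)
  rw [← this]
  congr 1
  rw [Nat.ofDigits_cons, Nat.ofDigits_cons, Nat.ofDigits_append,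
    ofDigits_replicate_zero, Nat.ofDigits_singleton]
  simp [List.length_replicate]
  ring

lemma partsum_ge_digitsum {b x m : ℕ} (hb : 1 ≤ b) (h : PartSum b x m) :
    (Nat.digits b x).sum ≤ m := by
  obtain ⟨L, hne, hf, rfl⟩ := h
  rw [← hf]
  clear hf hne
  induction L with
  | nil => simp
  | cons l L ih =>
    simp only [List.flatten_cons, List.sum_append, List.map_cons, List.sum_cons]
    exact Nat.add_le_add (Nat.sum_le_ofDigits l hb) ih

lemma partsum_modeq {b x m : ℕ} (hb : 3 ≤ b) (h : PartSum b x m) :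
    m ≡ x [MOD b - 1] := by
  obtain ⟨L, hne, hf, rfl⟩ := h
  have hb1 : b % (b - 1) = 1 := by
    have h3 : b - (b - 1) = 1 := by omega
    rw [Nat.mod_eq_sub_mod (by omega), h3, Nat.mod_eq_of_lt (by omega)]
  have hx : x ≡ (Nat.digits b x).sum [MOD b - 1] := Nat.modEq_digits_sum (b-1) b hb1 x
  rw [← hf] at hx
  refine Nat.ModEq.trans ?_ hx.symm
  clear hx hf hne
  induction L with
  | nil => rfl
  | cons l L ih =>
    simp only [List.flatten_cons, List.sum_append, List.map_cons, List.sum_cons]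
    refine Nat.ModEq.add ?_ ih
    calc Nat.ofDigits b l ≡ Nat.ofDigits (b % (b-1)) l [MOD b-1] := Nat.ofDigits_modEq b (b-1) l
      _ = l.sum := by rw [hb1]; exact_mod_cast Nat.ofDigits_one l

lemma heads_sublist (L : List (List ℕ)) (hne : ∀ l ∈ L, l ≠ []) :
    L.map (fun l => l.headI) <+ L.flatten := by
  induction L with
  | nil => simp
  | cons l L ih =>
    have hl : l ≠ [] := hne l (by simp)
    obtain ⟨a, t, rfl⟩ := List.exists_cons_of_ne_nil hl
    simp only [List.map_cons, List.flatten_cons, List.cons_append, List.headI]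
    exact (List.Sublist.trans (ih fun x hx => hne x (by simp [hx]))
      (List.sublist_append_right t _)).cons₂ a

lemma sum_mod_heads (b : ℕ) (L : List (List ℕ)) (hne : ∀ l ∈ L, l ≠ []) :
    (L.map (fun l => Nat.ofDigits b l)).sum ≡ (L.map (fun l => l.headI)).sum [MOD b] := by
  induction L with
  | nil => rfl
  | cons l L ih =>
    simp only [List.map_cons, List.sum_cons]
    refine Nat.ModEq.add ?_ (ih fun x hx => hne x (by simp [hx]))
    have hl : l ≠ [] := hne l (by simp)
    obtain ⟨a, t, rfl⟩ := List.exists_cons_of_ne_nil hl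
    rw [Nat.ofDigits_cons]
    simp only [List.headI]
    have h0 : ((b : ℕ) * Nat.ofDigits b t : ℕ) ≡ 0 [MOD b] :=
      (Nat.modEq_zero_iff_dvd).2 ⟨Nat.ofDigits b t, rfl⟩
    have := Nat.ModEq.add_left a h0
    simpa using this

lemma partsum_mod_b_ne_zero {b k m : ℕ} (hb : 4 ≤ b)
    (h : PartSum b (2 * b ^ (k + 2) + (b - 2) * b + (b - 1)) m) : m % b ≠ 0 := by
  obtain ⟨L, hne, hf, rfl⟩ := h
  rw [digits_n b k hb] at hf
  have hmod := sum_mod_heads b L hne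
  have hLne : L ≠ [] := by rintro rfl; simp at hf
  obtain ⟨l, L', rfl⟩ := List.exists_cons_of_ne_nil hLne
  have hl : l ≠ [] := hne l (by simp)
  obtain ⟨a, t, rfl⟩ := List.exists_cons_of_ne_nil hl
  simp only [List.flatten_cons, List.cons_append] at hf
  have ha : a = b - 1 := (List.cons_eq_cons.1 hf).1
  have htail : t ++ L'.flatten = (b-2) :: (List.replicate k 0 ++ [2]) :=
    (List.cons_eq_cons.1 hf).2
  subst ha
  have h1 : L'.map (fun l => l.headI) <+ L'.flatten :=
    heads_sublist L' fun x hx => hne x (by simp [hx])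
  have h2 : L'.flatten <+ (b-2) :: (List.replicate k 0 ++ [2]) := by
    rw [← htail]; exact List.sublist_append_right t _
  have h3 : L'.map (fun l => l.headI) <+ [b-2] ++ (List.replicate k 0 ++ [2]) := h1.trans h2
  rw [List.sublist_append_iff] at h3
  obtain ⟨s₁, s₂₃, hs, hs₁, hs₂₃⟩ := h3
  rw [List.sublist_append_iff] at hs₂₃
  obtain ⟨s₂, s₃, hs', hs₂, hs₃⟩ := hs₂₃
  have hsum2 : s₂.sum = 0 :=
    List.sum_eq_zero fun x hx => List.eq_of_mem_replicate (hs₂.subset hx)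
  have hsum1 : s₁.sum = 0 ∨ s₁.sum = b - 2 := by
    rcases List.sublist_singleton.1 hs₁ with h | h <;> simp [h]
  have hsum3 : s₃.sum = 0 ∨ s₃.sum = 2 := by
    rcases List.sublist_singleton.1 hs₃ with h | h <;> simp [h]
  have hsum : (List.map (fun l => l.headI) (((b-1) :: t) :: L')).sum
      = (b-1) + (s₁.sum + (s₂.sum + s₃.sum)) := by
    simp [hs, hs', List.sum_append]
  rw [Nat.ModEq, hsum, hsum2] at hmod
  rw [hmod]
  rcases hsum1 with h1' | h1' <;> rcases hsum3 with h3' | h3' <;> rw [h1', h3'] <;>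
    exact mod_ne_zero' (by omega) (by omega) (by omega)

lemma digitsum_zero {b x : ℕ} (hb : 2 ≤ b) (h : (Nat.digits b x).sum = 0) : x = 0 := by
  by_contra hx
  have hne : Nat.digits b x ≠ [] := Nat.digits_ne_nil_iff_ne_zero.2 hx
  have hlast := Nat.getLast_digit_ne_zero b hx
  have hmem := List.getLast_mem hne
  have hle := List.single_le_sum (fun y (_ : y ∈ Nat.digits b x) => Nat.zero_le y) _ hmem
  omega

theorem stmt_9 (b k : ℕ) (hb : 4 ≤ b) :
    ¬ (2 * b ^ (k + 2) + (b - 2) * b + (b - 1) < b ∨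
       (∃ m₁, PartSum b (2 * b ^ (k + 2) + (b - 2) * b + (b - 1)) m₁ ∧ m₁ < b) ∨
       (∃ m₁ m₂, PartSum b (2 * b ^ (k + 2) + (b - 2) * b + (b - 1)) m₁ ∧
         PartSum b m₁ m₂ ∧ m₂ < b)) := by
  set n := 2 * b ^ (k + 2) + (b - 2) * b + (b - 1) with hn
  have hbk : b ≤ b ^ (k + 2) := Nat.le_self_pow (by omega) b
  have hsum_n : (Nat.digits b n).sum = 2 * b - 1 := by
    rw [hn, digits_n b k hb]
    simp [List.sum_replicate]
    omega
  rintro (h | ⟨m₁, h₁, hlt⟩ | ⟨m₁, m₂, h₁, h₂, hlt⟩)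
  · omega
  · have := partsum_ge_digitsum (b := b) (by omega) h₁
    omega
  · have hd₁ : 2 * b - 1 ≤ m₁ := hsum_n ▸ partsum_ge_digitsum (by omega) h₁
    have hd₂ : (Nat.digits b m₁).sum ≤ m₂ := partsum_ge_digitsum (by omega) h₂
    have hmod₁ : m₁ ≡ n [MOD b - 1] := partsum_modeq (by omega) h₁
    have hmod₂ : m₂ ≡ m₁ [MOD b - 1] := partsum_modeq (by omega) h₂
    have hnmod : n % (b - 1) = 1 := by
      have h5 := Nat.modEq_digits_sum (b-1) b
        (by
          have h3 : b - (b - 1) = 1 := by omega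
          rw [Nat.mod_eq_sub_mod (by omega), h3, Nat.mod_eq_of_lt (by omega : 1 < b - 1)]) n
      rw [hsum_n, Nat.ModEq] at h5
      have h7 : (2 * b - 1) % (b - 1) = 1 := by
        have h6 : 2 * b - 1 = 1 + (b - 1) * 2 := by omega
        rw [h6, Nat.add_mul_mod_self_left, Nat.mod_eq_of_lt (by omega : 1 < b - 1)]
      rw [h7] at h5
      exact h5
    have hm₂ : m₂ = 1 := by
      have h7 := (hmod₂.trans hmod₁)
      rw [Nat.ModEq, hnmod] at h7
      rcases Nat.lt_or_ge m₂ (b-1) with h | h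
      · rw [Nat.mod_eq_of_lt h] at h7; exact h7
      · have h8 : m₂ = b - 1 := by omega
        rw [h8, Nat.mod_self] at h7
        omega
    have hds : (Nat.digits b m₁).sum ≤ 1 := hm₂ ▸ hd₂
    have hm₁ne : m₁ ≠ 0 := by omega
    have hdig : Nat.digits b m₁ = m₁ % b :: Nat.digits b (m₁ / b) :=
      Nat.digits_def' (by omega) (Nat.pos_of_ne_zero hm₁ne)
    rw [hdig, List.sum_cons] at hds
    have hmb : m₁ % b ≠ 0 := partsum_mod_b_ne_zero hb h₁
    have hdiv : m₁ / b = 0 := by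
      apply digitsum_zero (b := b) (by omega)
      omega
    have hm : m₁ % b = m₁ := by
      conv_rhs => rw [← Nat.div_add_mod m₁ b]
      rw [hdiv, Nat.mul_zero, Nat.zero_add]
    omega
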